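/- Let G ⊆ ∏_{n∈ℕ} ℤ be a subgroup. For x ∈ G define Z_x = {c ∈ S \ {0} : ⟨c, x⟩ = 0}, where S = ⊕_{n∈ℕ} ℤ and ⟨c,x⟩ = Σ_i c(i)x(i). Then the family {Z_x : x ∈ G} has the strong finite intersection property: every finite subfamily has infinite intersection. -/

import Mathlib

theorem aux_exists_orth (t : Finset (ℕ → ℤ)) :
    ∃ c : ℕ →₀ ℤ, c ≠ 0 ∧ ∀ x ∈ t, c.sum (fun i ci => ci * x i) = 0 := by
  classical
  set n := t.card with hn
  set v : Fin (n + 1) → (↥t → ℤ) := fun k x => (x : ℕ → ℤ) k with hv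
  have hnli : ¬ LinearIndependent ℤ v := by
    intro h
    have := h.fintype_card_le_finrank
    rw [Module.finrank_fintype_fun_eq_card] at this
    simp [Fintype.card_coe] at this
    omega
  obtain ⟨g, hg0, i0, hi0⟩ := Fintype.not_linearIndependent_iff.mp hnli
  set c : ℕ →₀ ℤ := Finsupp.onFinset (Finset.range (n + 1))
    (fun k => if h : k < n + 1 then g ⟨k, h⟩ else 0)
    (by intro a ha; simp only [Finset.mem_range]; by_contra h; simp [h] at ha) with hc
  refine ⟨c, ?_, ?_⟩
  · intro h
    apply hi0
    have : c (i0 : ℕ) = 0 := by rw [h]; rfl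
    simpa [hc, Finsupp.onFinset_apply, i0.isLt, i0.is_le, not_lt.mpr i0.is_le] using this
  · intro x hx
    have hsub : c.support ⊆ Finset.range (n + 1) := Finsupp.support_onFinset_subset
    rw [Finsupp.sum_of_support_subset c hsub _ (by intro i _; ring)]
    have := congrFun hg0 ⟨x, hx⟩
    simp only [Finset.sum_apply, Pi.smul_apply, smul_eq_mul, Pi.zero_apply, hv] at this
    rw [Finset.sum_range fun k => c k * x k]
    rw [← this]
    apply Finset.sum_congr rfl
    intro k _
    simp [hc, Finsupp.onFinset_apply, k.isLt, k.is_le, not_lt.mpr k.is_le]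

theorem stmt_17 (G : AddSubgroup (ℕ → ℤ)) (t : Finset (ℕ → ℤ))
    (ht : ↑t ⊆ (G : Set (ℕ → ℤ))) :
    {c : ℕ →₀ ℤ | c ≠ 0 ∧ ∀ x ∈ t, c.sum (fun i ci => ci * x i) = 0}.Infinite := by
  obtain ⟨c, hc0, hcsum⟩ := aux_exists_orth t
  obtain ⟨j, hj⟩ : ∃ j, c j ≠ 0 := by
    by_contra h
    push_neg at h
    exact hc0 (Finsupp.ext h)
  apply Set.infinite_of_injective_forall_mem
    (f := fun m : ℕ => ((m : ℤ) + 1) • c)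
  · intro a b hab
    have := congrFun (congrArg (fun f : ℕ →₀ ℤ => (f : ℕ → ℤ)) hab) j
    simp only [Finsupp.coe_smul, Pi.smul_apply, smul_eq_mul] at this
    have h2 : (a : ℤ) + 1 = (b : ℤ) + 1 := mul_right_cancel₀ hj this
    exact_mod_cast by linarith
  · intro m
    refine ⟨?_, ?_⟩
    · intro h
      apply hj
      have := congrFun (congrArg (fun f : ℕ →₀ ℤ => (f : ℕ → ℤ)) h) j
      simp only [Finsupp.coe_smul, Pi.smul_apply, smul_eq_mul, Finsupp.coe_zero,
        Pi.zero_apply] at this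
      rcases mul_eq_zero.mp this with h1 | h1
      · exfalso; omega
      · exact h1
    · intro x hx
      have hsub : (((m : ℤ) + 1) • c).support ⊆ c.support := Finsupp.support_smul
      rw [Finsupp.sum_of_support_subset _ hsub _ (by intro i _; ring)]
      have : ∑ i ∈ c.support, (((m : ℤ) + 1) • c) i * x i
          = ((m : ℤ) + 1) * ∑ i ∈ c.support, c i * x i := by
        rw [Finset.mul_sum]
        apply Finset.sum_congr rfl
        intro i _
        simp [mul_assoc]
      rw [this]
      have := hcsum x hx
      rw [Finsupp.sum] at this
      rw [this, mul_zero]
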